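/- Fix x ∈ ℝᵏ, y ∈ ℝ, and a measurable set S ⊆ ℝ of positive Lebesgue measure. Then the reparameterized negative conditional log-likelihood ℓ(v, λ) = ½·(λ·y² − 2y·vᵀx) + log( ∫_S exp( −½·(λ·z² − 2z·vᵀx) ) dz ) is a convex function of (v, λ) on ℝᵏ × (0, ∞). In particular, the log-partition function (v, λ) ↦ log ∫_S exp(z·vᵀx − λ·z²/2) dz is convex on ℝᵏ × (0, ∞). -/

import Mathlib

open Matrix MeasureTheory

private lemma integ_aux {S : Set ℝ} (c l : ℝ) (hl : 0 < l) :
    IntegrableOn (fun z : ℝ => Real.exp (z * c - l * z ^ 2 / 2)) S := by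
  have h1 : Integrable (fun z : ℝ => Real.exp (-(l / 2) * z ^ 2)) :=
    integrable_exp_neg_mul_sq (by linarith)
  have h2 : Integrable (fun z : ℝ =>
      Real.exp (c ^ 2 / (2 * l)) * Real.exp (-(l / 2) * (z - c / l) ^ 2)) :=
    (h1.comp_sub_right (c / l)).const_mul _
  have heq : (fun z : ℝ => Real.exp (z * c - l * z ^ 2 / 2)) =
      fun z : ℝ => Real.exp (c ^ 2 / (2 * l)) * Real.exp (-(l / 2) * (z - c / l) ^ 2) := by
    funext z
    rw [← Real.exp_add]
    congr 1
    field_simp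
    ring
  rw [heq]
  exact h2.integrableOn

private lemma pos_aux {S : Set ℝ} (hS : MeasurableSet S) (hpos : 0 < volume S)
    (c l : ℝ) (hl : 0 < l) : 0 < ∫ z in S, Real.exp (z * c - l * z ^ 2 / 2) := by
  rw [setIntegral_pos_iff_support_of_nonneg_ae
    (Filter.Eventually.of_forall fun z => (Real.exp_pos _).le) (integ_aux c l hl)]
  have hsupp : (Function.support fun z : ℝ => Real.exp (z * c - l * z ^ 2 / 2)) = Set.univ := by
    ext z; simp [Function.mem_support, (Real.exp_pos _).ne']
  rw [hsupp, Set.univ_inter]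
  exact hpos

private lemma core_convex {k : ℕ} (x : Fin k → ℝ) {S : Set ℝ} (hS : MeasurableSet S)
    (hpos : 0 < volume S) :
    ConvexOn ℝ {p : (Fin k → ℝ) × ℝ | 0 < p.2}
      (fun p => Real.log (∫ z in S, Real.exp (z * (p.1 ⬝ᵥ x) - p.2 * z ^ 2 / 2))) := by
  have hconv : Convex ℝ {p : (Fin k → ℝ) × ℝ | 0 < p.2} := by
    intro p hp q hq a b ha hb hab
    simp only [Set.mem_setOf_eq] at *
    have h2 : (a • p + b • q).2 = a * p.2 + b * q.2 := rfl
    rw [h2]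
    rcases ha.eq_or_lt with rfl | ha'
    · nlinarith
    · nlinarith [mul_pos ha' hp, mul_nonneg hb hq.le]
  refine ⟨hconv, ?_⟩
  intro p hp q hq a b ha hb hab
  rcases ha.eq_or_lt with rfl | ha'
  · have hb1 : b = 1 := by linarith
    subst hb1; simp
  rcases hb.eq_or_lt with rfl | hb'
  · have ha1 : a = 1 := by linarith
    subst ha1; simp
  -- main case
  simp only [Set.mem_setOf_eq] at hp hq
  set c1 : ℝ := p.1 ⬝ᵥ x with hc1
  set c2 : ℝ := q.1 ⬝ᵥ x with hc2
  set l1 : ℝ := p.2 with hl1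
  set l2 : ℝ := q.2 with hl2
  have hmixl : 0 < a * l1 + b * l2 := by nlinarith [mul_pos ha' hp, mul_pos hb' hq]
  have hfst : (a • p + b • q).1 ⬝ᵥ x = a * c1 + b * c2 := by
    simp [add_dotProduct, smul_dotProduct, smul_eq_mul, hc1, hc2]
  have hsnd : (a • p + b • q).2 = a * l1 + b * l2 := rfl
  set g : ℝ → ℝ := fun z => Real.exp (z * c1 - l1 * z ^ 2 / 2) with hg
  set h : ℝ → ℝ := fun z => Real.exp (z * c2 - l2 * z ^ 2 / 2) with hh
  have hpw : (fun z : ℝ => Real.exp (z * (a * c1 + b * c2) - (a * l1 + b * l2) * z ^ 2 / 2)) =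
      fun z : ℝ => g z ^ a * h z ^ b := by
    funext z
    rw [hg, hh]
    rw [← Real.exp_mul, ← Real.exp_mul, ← Real.exp_add]
    congr 1
    ring
  have hgi : IntegrableOn g S := integ_aux c1 l1 hp
  have hhi : IntegrableOn h S := integ_aux c2 l2 hq
  have hmixi : IntegrableOn
      (fun z : ℝ => Real.exp (z * (a * c1 + b * c2) - (a * l1 + b * l2) * z ^ 2 / 2)) S :=
    integ_aux _ _ hmixl
  have hG : 0 < ∫ z in S, g z := pos_aux hS hpos c1 l1 hp
  have hH : 0 < ∫ z in S, h z := pos_aux hS hpos c2 l2 hq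
  have hMix : 0 < ∫ z in S,
      Real.exp (z * (a * c1 + b * c2) - (a * l1 + b * l2) * z ^ 2 / 2) :=
    pos_aux hS hpos _ _ hmixl
  -- Hölder inequality via lintegrals
  have hgm : Measurable g := by fun_prop
  have hhm : Measurable h := by fun_prop
  have hpq : (1 / a).HolderConjugate (1 / b) := by
    rw [Real.holderConjugate_iff]
    constructor
    · rw [lt_div_iff₀ ha']; linarith
    · rw [one_div, one_div, inv_inv, inv_inv]; exact hab
  have holder := ENNReal.lintegral_mul_le_Lp_mul_Lq (volume.restrict S) hpq
    (f := fun z => ENNReal.ofReal (g z) ^ a) (g := fun z => ENNReal.ofReal (h z) ^ b)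
    ((hgm.ennreal_ofReal.pow_const a).aemeasurable)
    ((hhm.ennreal_ofReal.pow_const b).aemeasurable)
  simp only [one_div, inv_inv, Pi.mul_apply] at holder
  simp only [ENNReal.rpow_rpow_inv (ne_of_gt ha'), ENNReal.rpow_rpow_inv (ne_of_gt hb')]
    at holder
  rw [hpw] at hMix hmixi
  have hGl : (∫⁻ z in S, ENNReal.ofReal (g z)) = ENNReal.ofReal (∫ z in S, g z) :=
    (MeasureTheory.ofReal_integral_eq_lintegral_ofReal hgi
      (Filter.Eventually.of_forall fun z => (Real.exp_pos _).le)).symm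
  have hHl : (∫⁻ z in S, ENNReal.ofReal (h z)) = ENNReal.ofReal (∫ z in S, h z) :=
    (MeasureTheory.ofReal_integral_eq_lintegral_ofReal hhi
      (Filter.Eventually.of_forall fun z => (Real.exp_pos _).le)).symm
  have hMl : ENNReal.ofReal (∫ z in S, g z ^ a * h z ^ b)
      = ∫⁻ z in S, ENNReal.ofReal (g z ^ a * h z ^ b) :=
    MeasureTheory.ofReal_integral_eq_lintegral_ofReal hmixi
      (Filter.Eventually.of_forall fun z => by positivity)
  have hMl2 : (∫⁻ z in S, ENNReal.ofReal (g z ^ a * h z ^ b))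
      = ∫⁻ z in S, ENNReal.ofReal (g z) ^ a * ENNReal.ofReal (h z) ^ b := by
    refine lintegral_congr fun z => ?_
    rw [ENNReal.ofReal_mul (Real.rpow_nonneg (Real.exp_pos _).le _),
      ENNReal.ofReal_rpow_of_pos (Real.exp_pos _), ENNReal.ofReal_rpow_of_pos (Real.exp_pos _)]
  have key : ENNReal.ofReal (∫ z in S, g z ^ a * h z ^ b)
      ≤ ENNReal.ofReal ((∫ z in S, g z) ^ a * (∫ z in S, h z) ^ b) := by
    rw [hMl, hMl2, ENNReal.ofReal_mul (Real.rpow_nonneg hG.le _),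
      ← ENNReal.ofReal_rpow_of_pos hG, ← ENNReal.ofReal_rpow_of_pos hH, ← hGl, ← hHl]
    exact holder
  have hreal : (∫ z in S, g z ^ a * h z ^ b) ≤ (∫ z in S, g z) ^ a * (∫ z in S, h z) ^ b := by
    rwa [ENNReal.ofReal_le_ofReal_iff (by positivity)] at key
  -- finish
  show Real.log (∫ z in S, Real.exp (z * ((a • p + b • q).1 ⬝ᵥ x)
      - (a • p + b • q).2 * z ^ 2 / 2)) ≤ _
  rw [hfst, hsnd, hpw]
  have hlog : Real.log (∫ z in S, g z ^ a * h z ^ b)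
      ≤ Real.log ((∫ z in S, g z) ^ a * (∫ z in S, h z) ^ b) :=
    Real.log_le_log hMix hreal
  rw [Real.log_mul (Real.rpow_pos_of_pos hG a).ne' (Real.rpow_pos_of_pos hH b).ne',
    Real.log_rpow hG, Real.log_rpow hH] at hlog
  simpa [smul_eq_mul] using hlog

set_option maxHeartbeats 1000000 in
theorem stmt_18 {k : ℕ} (x : Fin k → ℝ) (y : ℝ) (S : Set ℝ) (hS : MeasurableSet S)
    (hpos : 0 < MeasureTheory.volume S) :
    ConvexOn ℝ {p : (Fin k → ℝ) × ℝ | 0 < p.2}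
        (fun p => (1 / 2) * (p.2 * y ^ 2 - 2 * y * (p.1 ⬝ᵥ x))
          + Real.log (∫ z in S, Real.exp (-(1 / 2) * (p.2 * z ^ 2 - 2 * z * (p.1 ⬝ᵥ x))))) ∧
      ConvexOn ℝ {p : (Fin k → ℝ) × ℝ | 0 < p.2}
        (fun p => Real.log (∫ z in S, Real.exp (z * (p.1 ⬝ᵥ x) - p.2 * z ^ 2 / 2))) := by
  have hcore := core_convex x hS hpos
  refine ⟨?_, hcore⟩
  have haff : ConvexOn ℝ {p : (Fin k → ℝ) × ℝ | 0 < p.2}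
      (fun p : (Fin k → ℝ) × ℝ => (1 / 2 : ℝ) * (p.2 * y ^ 2 - 2 * y * (p.1 ⬝ᵥ x))) := by
    refine ⟨hcore.1, fun p hp q hq a b ha hb hab => le_of_eq ?_⟩
    simp only [Prod.fst_add, Prod.snd_add, Prod.smul_fst, Prod.smul_snd,
      add_dotProduct, smul_dotProduct, smul_eq_mul]
    ring
  have harg : ∀ c l z : ℝ, -(1 / 2 : ℝ) * (l * z ^ 2 - 2 * z * c) = z * c - l * z ^ 2 / 2 :=
    fun c l z => by ring
  simp_rw [harg]
  exact haff.add hcore
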